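/- There is an injective group homomorphism from the direct product A × F, where A is a free abelian group of countably infinite rank (e.g. ⊕_{i ∈ ℕ} ℤ) and F is the free group on countably many generators, into GL₂(ℂ). -/

import Mathlib

open Matrix Polynomial Pointwise
set_option synthInstance.maxHeartbeats 1000000
set_option maxHeartbeats 1000000
noncomputable section

def Am (k : ℕ) : Matrix (Fin 2) (Fin 2) ℂ := !![1 + 9*k, -27*k^2; 3, 1 - 9*k]
def Am' (k : ℕ) : Matrix (Fin 2) (Fin 2) ℂ := !![1 - 9*k, 27*k^2; -3, 1 + 9*k]

lemma Am_mul (k : ℕ) : Am k * Am' k = 1 := by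
  ext i j
  fin_cases i <;> fin_cases j <;>
    simp [Am, Am', Matrix.mul_apply, Fin.sum_univ_two] <;> ring

lemma Am_mul' (k : ℕ) : Am' k * Am k = 1 := by
  ext i j
  fin_cases i <;> fin_cases j <;>
    simp [Am, Am', Matrix.mul_apply, Fin.sum_univ_two] <;> ring

def aGen (k : ℕ) : GL (Fin 2) ℂ := ⟨Am k, Am' k, Am_mul k, Am_mul' k⟩

def Complex.abs : AbsoluteValue ℂ ℝ := NormedField.toAbsoluteValue ℂ

lemma Complex.abs_apply' (z : ℂ) : Complex.abs z = ‖z‖ := rfl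

@[simp] lemma Complex.abs_ofNat' (n : ℕ) [n.AtLeastTwo] : Complex.abs (no_index (OfNat.ofNat n : ℂ)) = OfNat.ofNat n := by
  rw [Complex.abs_apply']; exact Complex.norm_ofNat n

@[simp] lemma Complex.abs_pos' {z : ℂ} : 0 < Complex.abs z ↔ z ≠ 0 := AbsoluteValue.pos_iff _

lemma Complex.abs_intCast (n : ℤ) : Complex.abs (n : ℂ) = |(n : ℝ)| := by
  rw [Complex.abs_apply']; exact Complex.norm_intCast n

lemma Complex.abs_exp (z : ℂ) : Complex.abs (Complex.exp z) = Real.exp z.re := by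
  rw [Complex.abs_apply']; exact Complex.norm_exp z

def XS (k : ℕ) : Set (GL (Fin 2) ℂ) :=
  {g | Complex.abs (3*((g : Matrix (Fin 2) (Fin 2) ℂ) 0 1 - 3*k*(g : Matrix (Fin 2) (Fin 2) ℂ) 1 1)
      - (g : Matrix (Fin 2) (Fin 2) ℂ) 1 1) < Complex.abs ((g : Matrix (Fin 2) (Fin 2) ℂ) 1 1)}

def YS (k : ℕ) : Set (GL (Fin 2) ℂ) :=
  {g | Complex.abs (3*((g : Matrix (Fin 2) (Fin 2) ℂ) 0 1 - 3*k*(g : Matrix (Fin 2) (Fin 2) ℂ) 1 1)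
      + (g : Matrix (Fin 2) (Fin 2) ℂ) 1 1) ≤ Complex.abs ((g : Matrix (Fin 2) (Fin 2) ℂ) 1 1)}

lemma col_ne (g : GL (Fin 2) ℂ) (h1 : (g : Matrix (Fin 2) (Fin 2) ℂ) 1 1 = 0) :
    (g : Matrix (Fin 2) (Fin 2) ℂ) 0 1 ≠ 0 := by
  intro h0
  have hdet : (g : Matrix (Fin 2) (Fin 2) ℂ).det ≠ 0 :=
    ((Matrix.isUnit_iff_isUnit_det _).mp g.isUnit).ne_zero
  rw [Matrix.det_fin_two, h0, h1] at hdet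
  simp at hdet

lemma key_disj {i j : ℕ} (hij : i ≠ j) {x y : ℂ}
    (hi : Complex.abs (3*(x - 3*(i:ℂ)*y)) ≤ 2 * Complex.abs y)
    (hj : Complex.abs (3*(x - 3*(j:ℂ)*y)) ≤ 2 * Complex.abs y)
    (hy : y ≠ 0) : False := by
  have e : 3*(x - 3*(j:ℂ)*y) - 3*(x - 3*(i:ℂ)*y) = (9*(((i:ℤ)-(j:ℤ) : ℤ):ℂ))*y := by
    push_cast; ring
  have h1 : (1:ℝ) ≤ Complex.abs (((i:ℤ)-(j:ℤ) : ℤ):ℂ) := by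
    rw [Complex.abs_intCast]
    have : ((i:ℤ)-(j:ℤ)) ≠ 0 := sub_ne_zero.mpr (by exact_mod_cast hij)
    exact_mod_cast Int.one_le_abs this
  have h2 : Complex.abs ((9*(((i:ℤ)-(j:ℤ) : ℤ):ℂ))*y)
      = 9 * Complex.abs (((i:ℤ)-(j:ℤ) : ℤ):ℂ) * Complex.abs y := by
    simp [_root_.map_mul]
  have h3 : Complex.abs (3*(x - 3*(j:ℂ)*y) - 3*(x - 3*(i:ℂ)*y))
      ≤ 4 * Complex.abs y := by
    calc Complex.abs (3*(x - 3*(j:ℂ)*y) - 3*(x - 3*(i:ℂ)*y))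
        ≤ Complex.abs (3*(x - 3*(j:ℂ)*y)) + Complex.abs (3*(x - 3*(i:ℂ)*y)) :=
          AbsoluteValue.sub_le_add _ _ _
      _ ≤ 4 * Complex.abs y := by linarith
  rw [e, h2] at h3
  have hypos : 0 < Complex.abs y := by simpa using hy
  nlinarith

lemma mem_XS_bound {k : ℕ} {g : GL (Fin 2) ℂ} (h : g ∈ XS k) :
    Complex.abs (3*((g : Matrix (Fin 2) (Fin 2) ℂ) 0 1 - 3*(k:ℂ)*(g : Matrix (Fin 2) (Fin 2) ℂ) 1 1))
      ≤ 2 * Complex.abs ((g : Matrix (Fin 2) (Fin 2) ℂ) 1 1) := by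
  set x := (g : Matrix (Fin 2) (Fin 2) ℂ) 0 1
  set y := (g : Matrix (Fin 2) (Fin 2) ℂ) 1 1
  have := AbsoluteValue.sub_le_add Complex.abs (3*(x - 3*(k:ℂ)*y) - y) (-y)
  simp only [sub_neg_eq_add, sub_add_cancel, map_neg_eq_map] at this
  have hX : Complex.abs (3*(x - 3*(k:ℂ)*y) - y) < Complex.abs y := h
  calc Complex.abs (3*(x - 3*(k:ℂ)*y)) = Complex.abs ((3*(x - 3*(k:ℂ)*y) - y) + y) := by ring_nf
    _ ≤ Complex.abs (3*(x - 3*(k:ℂ)*y) - y) + Complex.abs y := AbsoluteValue.add_le _ _ _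
    _ ≤ 2 * Complex.abs y := by linarith

lemma mem_YS_bound {k : ℕ} {g : GL (Fin 2) ℂ} (h : g ∈ YS k) :
    Complex.abs (3*((g : Matrix (Fin 2) (Fin 2) ℂ) 0 1 - 3*(k:ℂ)*(g : Matrix (Fin 2) (Fin 2) ℂ) 1 1))
      ≤ 2 * Complex.abs ((g : Matrix (Fin 2) (Fin 2) ℂ) 1 1) := by
  set x := (g : Matrix (Fin 2) (Fin 2) ℂ) 0 1
  set y := (g : Matrix (Fin 2) (Fin 2) ℂ) 1 1
  have hY : Complex.abs (3*(x - 3*(k:ℂ)*y) + y) ≤ Complex.abs y := h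
  calc Complex.abs (3*(x - 3*(k:ℂ)*y)) = Complex.abs ((3*(x - 3*(k:ℂ)*y) + y) + (-y)) := by ring_nf
    _ ≤ Complex.abs (3*(x - 3*(k:ℂ)*y) + y) + Complex.abs (-y) := AbsoluteValue.add_le _ _ _
    _ ≤ 2 * Complex.abs y := by rw [map_neg_eq_map]; linarith

lemma mem_XS_y_ne {k : ℕ} {g : GL (Fin 2) ℂ} (h : g ∈ XS k) :
    (g : Matrix (Fin 2) (Fin 2) ℂ) 1 1 ≠ 0 := by
  intro hy
  have hX : Complex.abs (3*((g : Matrix (Fin 2) (Fin 2) ℂ) 0 1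
      - 3*(k:ℂ)*(g : Matrix (Fin 2) (Fin 2) ℂ) 1 1)
      - (g : Matrix (Fin 2) (Fin 2) ℂ) 1 1) < Complex.abs ((g : Matrix (Fin 2) (Fin 2) ℂ) 1 1) := h
  rw [hy] at hX
  simp at hX
  have : (0:ℝ) ≤ 3 * Complex.abs ((g : Matrix (Fin 2) (Fin 2) ℂ) 0 1) := by positivity
  linarith

lemma mem_YS_y_ne {k : ℕ} {g : GL (Fin 2) ℂ} (h : g ∈ YS k) :
    (g : Matrix (Fin 2) (Fin 2) ℂ) 1 1 ≠ 0 := by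
  intro hy
  have hY : Complex.abs (3*((g : Matrix (Fin 2) (Fin 2) ℂ) 0 1
      - 3*(k:ℂ)*(g : Matrix (Fin 2) (Fin 2) ℂ) 1 1)
      + (g : Matrix (Fin 2) (Fin 2) ℂ) 1 1) ≤ Complex.abs ((g : Matrix (Fin 2) (Fin 2) ℂ) 1 1) := h
  rw [hy] at hY
  simp at hY
  have h0 : Complex.abs ((g : Matrix (Fin 2) (Fin 2) ℂ) 0 1) = 0 := by
    have : (0:ℝ) ≤ Complex.abs ((g : Matrix (Fin 2) (Fin 2) ℂ) 0 1) := by positivity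
    linarith
  exact col_ne g hy (by simpa using h0)

lemma hXnonempty (k : ℕ) : (XS k).Nonempty := by
  refine ⟨⟨!![1, 3*k+1/3; 0, 1], !![1, -(3*k+1/3); 0, 1], ?_, ?_⟩, ?_⟩
  · ext i j
    fin_cases i <;> fin_cases j <;>
      simp [Matrix.mul_apply, Fin.sum_univ_two] <;> try ring
  · ext i j
    fin_cases i <;> fin_cases j <;>
      simp [Matrix.mul_apply, Fin.sum_univ_two] <;> try ring
  · show Complex.abs (3*((3*(k:ℂ)+1/3) - 3*(k:ℂ)*1) - 1) < Complex.abs (1:ℂ)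
    have e : 3*((3*(k:ℂ)+1/3) - 3*(k:ℂ)*1) - 1 = 0 := by ring
    rw [e]
    simp

lemma hXdisj : Pairwise (Function.onFun Disjoint XS) := by
  intro i j hij
  rw [Function.onFun, Set.disjoint_left]
  intro g hgi hgj
  exact key_disj hij (mem_XS_bound hgi) (mem_XS_bound hgj) (mem_XS_y_ne hgi)

lemma hYdisj : Pairwise (Function.onFun Disjoint YS) := by
  intro i j hij
  rw [Function.onFun, Set.disjoint_left]
  intro g hgi hgj
  exact key_disj hij (mem_YS_bound hgi) (mem_YS_bound hgj) (mem_YS_y_ne hgi)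

lemma hXYdisj (i j : ℕ) : Disjoint (XS i) (YS j) := by
  rw [Set.disjoint_left]
  intro g hgi hgj
  rcases eq_or_ne i j with rfl | hij
  · -- same index: strict + nonstrict contradiction
    set x := (g : Matrix (Fin 2) (Fin 2) ℂ) 0 1
    set y := (g : Matrix (Fin 2) (Fin 2) ℂ) 1 1
    have hX : Complex.abs (3*(x - 3*(i:ℂ)*y) - y) < Complex.abs y := hgi
    have hY : Complex.abs (3*(x - 3*(i:ℂ)*y) + y) ≤ Complex.abs y := hgj
    have key : 2 * Complex.abs y ≤ Complex.abs (3*(x - 3*(i:ℂ)*y) + y)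
        + Complex.abs (3*(x - 3*(i:ℂ)*y) - y) := by
      have e : (2:ℂ)*y = (3*(x - 3*(i:ℂ)*y) + y) - (3*(x - 3*(i:ℂ)*y) - y) := by ring
      calc 2 * Complex.abs y = Complex.abs ((2:ℂ)*y) := by
            rw [_root_.map_mul]; norm_num
        _ ≤ _ := by rw [e]; exact AbsoluteValue.sub_le_add _ _ _
    linarith
  · exact key_disj hij (mem_XS_bound hgi) (mem_YS_bound hgj) (mem_XS_y_ne hgi)

lemma mul_entry0 (k : ℕ) (g : GL (Fin 2) ℂ) :
    ((aGen k * g : GL (Fin 2) ℂ) : Matrix (Fin 2) (Fin 2) ℂ) 0 1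
      = (1 + 9*(k:ℂ)) * (g : Matrix (Fin 2) (Fin 2) ℂ) 0 1
        - 27*(k:ℂ)^2 * (g : Matrix (Fin 2) (Fin 2) ℂ) 1 1 := by
  show (Am k * (g : Matrix (Fin 2) (Fin 2) ℂ)) 0 1 = _
  simp [Am, Matrix.mul_apply, Fin.sum_univ_two]
  try ring

lemma mul_entry1 (k : ℕ) (g : GL (Fin 2) ℂ) :
    ((aGen k * g : GL (Fin 2) ℂ) : Matrix (Fin 2) (Fin 2) ℂ) 1 1
      = 3 * (g : Matrix (Fin 2) (Fin 2) ℂ) 0 1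
        + (1 - 9*(k:ℂ)) * (g : Matrix (Fin 2) (Fin 2) ℂ) 1 1 := by
  show (Am k * (g : Matrix (Fin 2) (Fin 2) ℂ)) 1 1 = _
  simp [Am, Matrix.mul_apply, Fin.sum_univ_two]
  try ring

lemma hX_pp (k : ℕ) : (aGen k) • (YS k)ᶜ ⊆ XS k := by
  rintro _ ⟨g, hg, rfl⟩
  simp only [smul_eq_mul]
  set x := (g : Matrix (Fin 2) (Fin 2) ℂ) 0 1 with hx
  set y := (g : Matrix (Fin 2) (Fin 2) ℂ) 1 1 with hy
  have hg' : Complex.abs ((g : Matrix (Fin 2) (Fin 2) ℂ) 1 1)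
      < Complex.abs (3*(x - 3*(k:ℂ)*y) + y) := by
    have := hg
    simp only [Set.mem_compl_iff, YS, Set.mem_setOf_eq, not_le] at this
    exact this
  show Complex.abs (3*(((aGen k * g : GL (Fin 2) ℂ) : Matrix (Fin 2) (Fin 2) ℂ) 0 1
      - 3*(k:ℂ)*((aGen k * g : GL (Fin 2) ℂ) : Matrix (Fin 2) (Fin 2) ℂ) 1 1)
      - ((aGen k * g : GL (Fin 2) ℂ) : Matrix (Fin 2) (Fin 2) ℂ) 1 1)
      < Complex.abs (((aGen k * g : GL (Fin 2) ℂ) : Matrix (Fin 2) (Fin 2) ℂ) 1 1)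
  rw [mul_entry0, mul_entry1]
  have e1 : 3*(((1 + 9*(k:ℂ)) * x - 27*(k:ℂ)^2 * y) - 3*(k:ℂ)*(3 * x + (1 - 9*(k:ℂ)) * y))
      - (3 * x + (1 - 9*(k:ℂ)) * y) = -y := by ring
  have e2 : 3 * x + (1 - 9*(k:ℂ)) * y = 3*(x - 3*(k:ℂ)*y) + y := by ring
  rw [← hx, ← hy, e1, e2, map_neg_eq_map]
  exact hg'

lemma inv_entry0 (k : ℕ) (g : GL (Fin 2) ℂ) :
    (((aGen k)⁻¹ * g : GL (Fin 2) ℂ) : Matrix (Fin 2) (Fin 2) ℂ) 0 1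
      = (1 - 9*(k:ℂ)) * (g : Matrix (Fin 2) (Fin 2) ℂ) 0 1
        + 27*(k:ℂ)^2 * (g : Matrix (Fin 2) (Fin 2) ℂ) 1 1 := by
  show (Am' k * (g : Matrix (Fin 2) (Fin 2) ℂ)) 0 1 = _
  simp [Am', Matrix.mul_apply, Fin.sum_univ_two]
  try ring

lemma inv_entry1 (k : ℕ) (g : GL (Fin 2) ℂ) :
    (((aGen k)⁻¹ * g : GL (Fin 2) ℂ) : Matrix (Fin 2) (Fin 2) ℂ) 1 1
      = -3 * (g : Matrix (Fin 2) (Fin 2) ℂ) 0 1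
        + (1 + 9*(k:ℂ)) * (g : Matrix (Fin 2) (Fin 2) ℂ) 1 1 := by
  show (Am' k * (g : Matrix (Fin 2) (Fin 2) ℂ)) 1 1 = _
  simp [Am', Matrix.mul_apply, Fin.sum_univ_two]
  try ring

lemma hY_pp (k : ℕ) : (aGen k)⁻¹ • (XS k)ᶜ ⊆ YS k := by
  rintro _ ⟨g, hg, rfl⟩
  simp only [smul_eq_mul]
  set x := (g : Matrix (Fin 2) (Fin 2) ℂ) 0 1 with hx
  set y := (g : Matrix (Fin 2) (Fin 2) ℂ) 1 1 with hy
  have hg' : Complex.abs ((g : Matrix (Fin 2) (Fin 2) ℂ) 1 1)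
      ≤ Complex.abs (3*(x - 3*(k:ℂ)*y) - y) := by
    have := hg
    simp only [Set.mem_compl_iff, XS, Set.mem_setOf_eq, not_lt] at this
    exact this
  show Complex.abs (3*((((aGen k)⁻¹ * g : GL (Fin 2) ℂ) : Matrix (Fin 2) (Fin 2) ℂ) 0 1
      - 3*(k:ℂ)*(((aGen k)⁻¹ * g : GL (Fin 2) ℂ) : Matrix (Fin 2) (Fin 2) ℂ) 1 1)
      + (((aGen k)⁻¹ * g : GL (Fin 2) ℂ) : Matrix (Fin 2) (Fin 2) ℂ) 1 1)
      ≤ Complex.abs ((((aGen k)⁻¹ * g : GL (Fin 2) ℂ) : Matrix (Fin 2) (Fin 2) ℂ) 1 1)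
  rw [inv_entry0, inv_entry1]
  have e1 : 3*(((1 - 9*(k:ℂ)) * x + 27*(k:ℂ)^2 * y) - 3*(k:ℂ)*(-3 * x + (1 + 9*(k:ℂ)) * y))
      + (-3 * x + (1 + 9*(k:ℂ)) * y) = y := by ring
  have e2 : -3 * x + (1 + 9*(k:ℂ)) * y = -(3*(x - 3*(k:ℂ)*y) - y) := by ring
  rw [← hx, ← hy, e1, e2, map_neg_eq_map]
  exact hg'

lemma rho_inj : Function.Injective (FreeGroup.lift aGen) :=
  FreeGroup.injective_lift_of_ping_pong aGen XS YS hXnonempty hXdisj hYdisj hXYdisj hX_pp hY_pp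

noncomputable section

def tr : ℝ := liouvilleNumber 3

lemma tr_trans : Transcendental ℤ tr := transcendental_liouvilleNumber (by norm_num)

def psi : (Π₀ _ : ℕ, ℤ) →+ ℝ := DFinsupp.sumAddHom (fun i => zmultiplesHom ℝ (tr ^ i))

lemma psi_apply (f : Π₀ _ : ℕ, ℤ) : psi f = f.sum fun i c => (c : ℝ) * tr ^ i := by
  rw [psi, DFinsupp.sumAddHom_apply, DFinsupp.sum, DFinsupp.sum]
  exact Finset.sum_congr rfl fun i _ => by simp [zsmul_eq_mul]

lemma psi_inj : Function.Injective psi := by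
  rw [injective_iff_map_eq_zero]
  intro f hf
  set p : Polynomial ℤ := f.sum fun i c => C c * X ^ i with hp
  have haev : (aeval tr) p = psi f := by
    rw [hp, psi_apply, DFinsupp.sum, DFinsupp.sum, map_sum]
    refine Finset.sum_congr rfl fun i _ => ?_
    simp [aeval_C, algebraMap_int_eq, eq_intCast]
  have hp0 : p = 0 := by
    by_contra hne
    exact tr_trans ⟨p, hne, by rw [haev, hf]⟩
  ext n
  have := congrArg (fun q => Polynomial.coeff q n) hp0
  simp only [hp, coeff_zero] at this
  rw [DFinsupp.sum, Polynomial.finset_sum_coeff] at this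
  simp only [coeff_C_mul, coeff_X_pow, mul_ite, mul_one, mul_zero] at this
  rw [Finset.sum_ite_eq f.support n (fun i => f i)] at this
  by_cases hn : n ∈ f.support
  · simp only [hn, if_true] at this
    simp [this]
  · rw [DFinsupp.mem_support_iff, not_not] at hn
    simp [hn]

def expu : Multiplicative ℝ →* ℂˣ :=
  MonoidHom.mk' (fun r => Units.mk0 (Complex.exp ((Multiplicative.toAdd r : ℝ) : ℂ))
      (Complex.exp_ne_zero _))
    (by
      intro a b
      ext
      simp [toAdd_mul, Complex.exp_add])

def chi : Multiplicative (Π₀ _ : ℕ, ℤ) →* GL (Fin 2) ℂ :=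
  (Units.map (Matrix.scalar (Fin 2)).toMonoidHom).comp
    (expu.comp (AddMonoidHom.toMultiplicative psi))

lemma chi_val (a : Multiplicative (Π₀ _ : ℕ, ℤ)) :
    (chi a : Matrix (Fin 2) (Fin 2) ℂ) = Matrix.scalar (Fin 2) (Complex.exp (psi a.toAdd)) := by
  simp [chi, expu, Units.coe_map]

lemma chi_det (a : Multiplicative (Π₀ _ : ℕ, ℤ)) :
    (Matrix.GeneralLinearGroup.det (chi a) : ℂ) = Complex.exp (psi a.toAdd) ^ 2 := by
  have : (Matrix.GeneralLinearGroup.det (chi a) : ℂ)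
      = (chi a : Matrix (Fin 2) (Fin 2) ℂ).det := rfl
  rw [this, chi_val]
  simp [Matrix.scalar_apply, Matrix.det_diagonal]

lemma comm_chi (a : Multiplicative (Π₀ _ : ℕ, ℤ)) (g : GL (Fin 2) ℂ) : Commute (chi a) g := by
  have h := Matrix.scalar_commute (n := Fin 2) (Complex.exp ((psi a.toAdd : ℝ) : ℂ))
    (fun r' => mul_comm _ _) (g : Matrix (Fin 2) (Fin 2) ℂ)
  exact Units.ext (by
    rw [Units.val_mul, Units.val_mul, chi_val]
    exact h)

lemma det_aGen (k : ℕ) : Matrix.GeneralLinearGroup.det (aGen k) = 1 := by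
  apply Units.ext
  show (Am k).det = 1
  rw [Am, Matrix.det_fin_two_of]
  ring

lemma det_rho (w : FreeGroup ℕ) :
    Matrix.GeneralLinearGroup.det (FreeGroup.lift aGen w) = 1 := by
  have h : (Matrix.GeneralLinearGroup.det).comp (FreeGroup.lift aGen)
      = (1 : FreeGroup ℕ →* ℂˣ) := by
    apply FreeGroup.ext_hom
    intro k
    simp only [MonoidHom.comp_apply, FreeGroup.lift_apply_of, MonoidHom.one_apply]
    exact det_aGen k
  calc Matrix.GeneralLinearGroup.det (FreeGroup.lift aGen w)
      = ((Matrix.GeneralLinearGroup.det).comp (FreeGroup.lift aGen)) w := rfl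
    _ = 1 := by rw [h]; rfl

/-- The direct product `A × F`, of a free abelian group `A` of countably infinite rank
with the free group `F` on countably many generators, embeds into `GL₂(ℂ)`. -/
theorem stmt_11 :
    ∃ f : (Multiplicative (Π₀ _ : ℕ, ℤ) × FreeGroup ℕ) →* GL (Fin 2) ℂ,
      Function.Injective f := by
  refine ⟨MonoidHom.noncommCoprod chi (FreeGroup.lift aGen) (fun m n => comm_chi m ((FreeGroup.lift aGen) n)), ?_⟩
  rw [injective_iff_map_eq_one]
  rintro ⟨a, w⟩ h
  rw [MonoidHom.noncommCoprod_apply] at h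
  have h' : chi a * FreeGroup.lift aGen w = 1 := h
  have hdet := congrArg Matrix.GeneralLinearGroup.det h'
  rw [_root_.map_mul, _root_.map_one, det_rho, mul_one] at hdet
  have hval : Complex.exp ((psi a.toAdd : ℝ) : ℂ) ^ 2 = 1 := by
    rw [← chi_det]
    rw [hdet]
    rfl
  have habs : Real.exp (psi a.toAdd) ^ 2 = 1 := by
    have := congrArg Complex.abs hval
    simpa [map_pow, Complex.abs_exp] using this
  have hr : psi a.toAdd = 0 := by
    have hpos := Real.exp_pos (psi a.toAdd)
    have h1 : Real.exp (psi a.toAdd) = 1 := by nlinarith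
    exact (Real.exp_eq_one_iff _).mp h1
  have ha : a.toAdd = 0 := psi_inj (by simpa using hr)
  have ha1 : a = 1 := toAdd_eq_zero.mp ha
  have hchi1 : chi a = 1 := by rw [ha1, _root_.map_one]
  rw [hchi1, one_mul] at h'
  have hw : w = 1 := rho_inj (by rw [h', _root_.map_one])
  exact Prod.mk_eq_one.mpr ⟨ha1, hw⟩
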